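/- There exists a constant K' > 0, depending only on q, |A|_∞ and θ, such that for every ε ∈ (0,1], every τ > 0 with sup_{t∈ℝ}|A(t+τ) − A(t)| ≤ ε, and every p ∈ ℤ with sup_{n∈ℤ}|t_{n+p} − t_n − τ| ≤ ε, the following hold for all n ∈ ℤ: (a) |X(t_{n+p+1}, u+τ) − X(t_{n+1}, u)| ≤ K'ε for all u ∈ [t_n, t_{n+1}]; (b) |X(t+τ, t_{n+p}) − X(t, t_n)| ≤ K'ε for all t ∈ [t_n, t_{n+1}]; (c) |X(t+τ, s+τ) − X(t,s)| ≤ K'ε for all t, s ∈ ℝ with |t − s| ≤ θ; (d) |X(t_{n+p+1}, t_{n+p}) − X(t_{n+1}, t_n)| ≤ K'ε. -/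

import Mathlib

open scoped Matrix
open MeasureTheory Filter

attribute [local instance] Matrix.frobeniusSeminormedAddCommGroup
  Matrix.frobeniusNormedAddCommGroup Matrix.frobeniusNormedSpace
  Matrix.frobeniusNormedRing Matrix.frobeniusNormedAlgebra Matrix.frobeniusIsBoundedSMul

noncomputable section

abbrev Mat (q : ℕ) := Matrix (Fin q) (Fin q) ℂ

private lemma gronBound_le {δ M e x : ℝ} (hM : 0 ≤ M) (he : 0 ≤ e) (hx : 0 ≤ x) :
    gronwallBound δ M e x ≤ (δ + e * x) * Real.exp (M * x) := by
  rcases eq_or_lt_of_le hM with h | h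
  · rw [← h, gronwallBound_K0]
    simp
  · rw [gronwallBound_of_K_ne_0 (ne_of_gt h)]
    have hmul : Real.exp (-(M * x)) * Real.exp (M * x) = 1 := by
      rw [← Real.exp_add]; simp
    have h1 : Real.exp (M * x) - 1 ≤ (M * x) * Real.exp (M * x) := by
      nlinarith [Real.add_one_le_exp (-(M * x)), Real.exp_pos (M * x)]
    have h2 : e / M * (Real.exp (M * x) - 1) ≤ e * x * Real.exp (M * x) := by
      rw [div_mul_eq_mul_div, div_le_iff₀ h]
      nlinarith [Real.exp_pos (M * x)]
    nlinarith [Real.exp_pos (M * x)]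

private lemma gron_aux {E : Type*} [NormedAddCommGroup E] [NormedSpace ℝ E]
    {f f' : ℝ → E} {a b M e : ℝ}
    (hM : 0 ≤ M) (he : 0 ≤ e) (hab : a ≤ b)
    (hd : ∀ u ∈ Set.Icc a b, HasDerivAt f (f' u) u)
    (hb : ∀ u ∈ Set.Icc a b, ‖f' u‖ ≤ M * ‖f u‖ + e) :
    ‖f b‖ ≤ (‖f a‖ + e * (b - a)) * Real.exp (M * (b - a)) := by
  have key := norm_le_gronwallBound_of_norm_deriv_right_le
    (f := f) (f' := f') (δ := ‖f a‖) (K := M) (ε := e) (a := a) (b := b)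
    (fun u hu => (hd u hu).continuousAt.continuousWithinAt)
    (fun u hu => ((hd u (Set.Ico_subset_Icc_self hu)).hasDerivWithinAt))
    le_rfl
    (fun u hu => hb u (Set.Ico_subset_Icc_self hu))
  have := key b ⟨hab, le_rfl⟩
  exact this.trans (gronBound_le hM he (by linarith))

section fb
variable {q : ℕ} {A : ℝ → Mat q} {X : ℝ → Mat q} {M : ℝ}

private lemma fwd_norm (hM : ∀ t, ‖A t‖ ≤ M) (hX : ∀ t : ℝ, HasDerivAt X (A t * X t) t)
    (K : Mat q) {s t : ℝ} (hst : s ≤ t) :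
    ‖X t * K‖ ≤ ‖X s * K‖ * Real.exp (M * (t - s)) := by
  have hM0 : 0 ≤ M := le_trans (norm_nonneg _) (hM 0)
  have h := gron_aux (f := fun u => X u * K) (f' := fun u => A u * (X u * K))
    hM0 le_rfl hst
    (fun u _ => by simpa [Matrix.mul_assoc] using (hX u).mul_const K)
    (fun u _ => by
      calc ‖A u * (X u * K)‖ ≤ ‖A u‖ * ‖X u * K‖ := norm_mul_le _ _
        _ ≤ M * ‖X u * K‖ + 0 := by
            have := hM u
            nlinarith [norm_nonneg (X u * K)])
  simpa using h

private lemma bwd_norm (hM : ∀ t, ‖A t‖ ≤ M) (hX : ∀ t : ℝ, HasDerivAt X (A t * X t) t)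
    (K : Mat q) {s t : ℝ} (hst : t ≤ s) :
    ‖X t * K‖ ≤ ‖X s * K‖ * Real.exp (M * (s - t)) := by
  have hM0 : 0 ≤ M := le_trans (norm_nonneg _) (hM 0)
  have h := gron_aux (f := fun u => X (t + s - u) * K)
    (f' := fun u => ((-1 : ℝ) • (A (t + s - u) * X (t + s - u))) * K)
    hM0 le_rfl hst
    (fun u _ => by
      have h1 := HasDerivAt.scomp (x := u) (hX (t + s - u))
          ((hasDerivAt_id u).const_sub (t + s))
      simpa [Function.comp_def] using h1.mul_const K)
    (fun u _ => by
      calc ‖((-1 : ℝ) • (A (t + s - u) * X (t + s - u))) * K‖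
          = ‖A (t + s - u) * (X (t + s - u) * K)‖ := by
            rw [neg_one_smul, neg_mul, norm_neg, Matrix.mul_assoc]
        _ ≤ ‖A (t + s - u)‖ * ‖X (t + s - u) * K‖ := norm_mul_le _ _
        _ ≤ M * ‖X (t + s - u) * K‖ + 0 := by
            have := hM (t + s - u)
            nlinarith [norm_nonneg (X (t + s - u) * K)])
  simp only [show t + s - t = s by ring, show t + s - s = t by ring] at h
  simpa using h

end fb

section fb2
variable {q : ℕ} {A : ℝ → Mat q} {X : ℝ → Mat q} {M : ℝ}

private lemma XXinv_bound (hM : ∀ t, ‖A t‖ ≤ M)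
    (hX : ∀ t : ℝ, HasDerivAt X (A t * X t) t) (hXinv : ∀ t : ℝ, IsUnit (X t))
    (t s : ℝ) : ‖X t * (X s)⁻¹‖ ≤ ‖(1 : Mat q)‖ * Real.exp (M * |t - s|) := by
  have hdet : IsUnit (X s).det := (Matrix.isUnit_iff_isUnit_det _).mp (hXinv s)
  have hbase : X s * (X s)⁻¹ = 1 := Matrix.mul_nonsing_inv _ hdet
  rcases le_total s t with h | h
  · have h2 := fwd_norm hM hX (X s)⁻¹ h
    rw [hbase] at h2
    rwa [abs_of_nonneg (by linarith : (0:ℝ) ≤ t - s)]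
  · have h2 := bwd_norm hM hX (X s)⁻¹ h
    rw [hbase] at h2
    rwa [abs_of_nonpos (by linarith : t - s ≤ 0), neg_sub]

private lemma diff_fwd (hM : ∀ t, ‖A t‖ ≤ M)
    (hX : ∀ t : ℝ, HasDerivAt X (A t * X t) t) (hXinv : ∀ t : ℝ, IsUnit (X t))
    {τ ε B : ℝ} (hA : ∀ t, ‖A (t + τ) - A t‖ ≤ ε) (hε : 0 ≤ ε)
    {s t : ℝ} (hst : s ≤ t)
    (hB : ∀ u ∈ Set.Icc s t, ‖X (u + τ) * (X (s + τ))⁻¹‖ ≤ B) :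
    ‖X (t + τ) * (X (s + τ))⁻¹ - X t * (X s)⁻¹‖ ≤
      ε * B * (t - s) * Real.exp (M * (t - s)) := by
  have hM0 : 0 ≤ M := le_trans (norm_nonneg _) (hM 0)
  have hB0 : 0 ≤ B := le_trans (norm_nonneg _) (hB s ⟨le_rfl, hst⟩)
  set P := (X (s + τ))⁻¹ with hP
  set Q := (X s)⁻¹ with hQ
  have h := gron_aux (f := fun u => X (u + τ) * P - X u * Q)
    (f' := fun u => A (u + τ) * (X (u + τ) * P) - A u * (X u * Q))
    (e := ε * B) hM0 (by positivity) hst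
    (fun u _ => by
      have h1 : HasDerivAt (fun u : ℝ => X (u + τ)) (A (u + τ) * X (u + τ)) u :=
        (hX (u + τ)).comp_add_const u τ
      have h2 := (h1.mul_const P).sub ((hX u).mul_const Q)
      simpa [Matrix.mul_assoc, Pi.sub_def] using h2)
    (fun u hu => by
      show ‖A (u + τ) * (X (u + τ) * P) - A u * (X u * Q)‖ ≤
        M * ‖X (u + τ) * P - X u * Q‖ + ε * B
      have hid : A (u + τ) * (X (u + τ) * P) - A u * (X u * Q)
          = A u * (X (u + τ) * P - X u * Q) + (A (u + τ) - A u) * (X (u + τ) * P) := by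
        noncomm_ring
      rw [hid]
      calc ‖A u * (X (u + τ) * P - X u * Q) + (A (u + τ) - A u) * (X (u + τ) * P)‖
          ≤ ‖A u * (X (u + τ) * P - X u * Q)‖ + ‖(A (u + τ) - A u) * (X (u + τ) * P)‖ :=
            norm_add_le _ _
        _ ≤ ‖A u‖ * ‖X (u + τ) * P - X u * Q‖ + ‖A (u + τ) - A u‖ * ‖X (u + τ) * P‖ :=
            add_le_add (norm_mul_le _ _) (norm_mul_le _ _)
        _ ≤ M * ‖X (u + τ) * P - X u * Q‖ + ε * B :=
            add_le_add (mul_le_mul_of_nonneg_right (hM u) (norm_nonneg _))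
              (mul_le_mul (hA u) (hB u hu) (norm_nonneg _) hε))
  have hdet : ∀ r : ℝ, X r * (X r)⁻¹ = 1 := fun r =>
    Matrix.mul_nonsing_inv _ ((Matrix.isUnit_iff_isUnit_det _).mp (hXinv r))
  have hzero : X (s + τ) * P - X s * Q = 0 := by rw [hP, hQ, hdet, hdet, sub_self]
  beta_reduce at h
  rw [hzero] at h
  simpa [mul_comm, mul_left_comm, mul_assoc] using h

end fb2

set_option maxHeartbeats 1000000 in
/-- uniform `ε`-closeness estimates for translates of the fundamental matrix
`X(t,s) = X(t) X(s)⁻¹`, with a constant `K'` depending only on `q`, `‖A‖_∞` and `θ`. -/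
theorem epsilon_translation_estimates {q : ℕ} (hq : 1 ≤ q)
    (ts : ℤ → ℝ) (hts : StrictMono ts)
    (htop : Tendsto ts atTop atTop) (hbot : Tendsto ts atBot atBot)
    (θ : ℝ) (hθ : IsLUB (Set.range fun n : ℤ => ts (n + 1) - ts n) θ)
    (A : ℝ → Mat q) (hAcont : Continuous A) (hAbdd : ∃ C : ℝ, ∀ t : ℝ, ‖A t‖ ≤ C)
    (X : ℝ → Mat q) (hX : ∀ t : ℝ, HasDerivAt X (A t * X t) t)
    (hXinv : ∀ t : ℝ, IsUnit (X t)) :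
    ∃ K' : ℝ, 0 < K' ∧
      ∀ ε : ℝ, ε ∈ Set.Ioc (0 : ℝ) 1 →
      ∀ τ : ℝ, 0 < τ → (∀ t : ℝ, ‖A (t + τ) - A t‖ ≤ ε) →
      ∀ p : ℤ, (∀ n : ℤ, |ts (n + p) - ts n - τ| ≤ ε) →
      ∀ n : ℤ,
        (∀ u ∈ Set.Icc (ts n) (ts (n + 1)),
          ‖X (ts (n + p + 1)) * (X (u + τ))⁻¹ - X (ts (n + 1)) * (X u)⁻¹‖ ≤ K' * ε) ∧
        (∀ t ∈ Set.Icc (ts n) (ts (n + 1)),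
          ‖X (t + τ) * (X (ts (n + p)))⁻¹ - X t * (X (ts n))⁻¹‖ ≤ K' * ε) ∧
        (∀ t s : ℝ, |t - s| ≤ θ →
          ‖X (t + τ) * (X (s + τ))⁻¹ - X t * (X s)⁻¹‖ ≤ K' * ε) ∧
        ‖X (ts (n + p + 1)) * (X (ts (n + p)))⁻¹ - X (ts (n + 1)) * (X (ts n))⁻¹‖ ≤ K' * ε := by
  obtain ⟨C, hC⟩ := hAbdd
  set M : ℝ := max 1 C with hMdef
  have hM : ∀ t, ‖A t‖ ≤ M := fun t => (hC t).trans (le_max_right _ _)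
  have hM1 : (1 : ℝ) ≤ M := le_max_left _ _
  have hM0 : (0 : ℝ) ≤ M := by linarith
  have hθpos : 0 < θ := by
    have h1 : ts (0 + 1) - ts 0 ≤ θ := hθ.1 ⟨0, rfl⟩
    have h2 : ts 0 < ts (0 + 1) := hts (by norm_num)
    linarith
  set L : ℝ := θ + 2 with hLdef
  have hθL : θ ≤ L := by linarith
  have hL0 : (0 : ℝ) < L := by linarith
  set N : ℝ := ‖(1 : Mat q)‖ with hNdef
  have hN0 : 0 ≤ N := norm_nonneg _
  set B : ℝ := N * Real.exp (M * L) with hBdef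
  have hB0 : 0 ≤ B := by positivity
  have hB : ∀ t s : ℝ, |t - s| ≤ L → ‖X t * (X s)⁻¹‖ ≤ B := by
    intro t s h
    refine (XXinv_bound hM hX hXinv t s).trans ?_
    have hexp : Real.exp (M * |t - s|) ≤ Real.exp (M * L) :=
      Real.exp_le_exp.mpr (mul_le_mul_of_nonneg_left h hM0)
    exact mul_le_mul_of_nonneg_left hexp hN0
  set Cd : ℝ := B * L * Real.exp (M * L) with hCdDef
  have hCd0 : 0 ≤ Cd := by positivity
  set Cc : ℝ := Cd + B * B * Cd with hCcDef
  have hCc0 : 0 ≤ Cc := by positivity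
  have hCdCc : Cd ≤ Cc := by nlinarith
  set Cl1 : ℝ := M * B with hCl1Def
  have hCl10 : 0 ≤ Cl1 := by positivity
  set Cl2 : ℝ := M * B * B with hCl2Def
  have hCl20 : 0 ≤ Cl2 := by positivity
  refine ⟨Cc + Cl1 + Cl2 + 1, by linarith, ?_⟩
  rintro ε ⟨hε0, hε1⟩ τ hτ hAτ p hp n
  -- forward difference estimate
  have hfwd : ∀ s t : ℝ, s ≤ t → t - s ≤ L →
      ‖X (t + τ) * (X (s + τ))⁻¹ - X t * (X s)⁻¹‖ ≤ Cd * ε := by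
    intro s t h1 h2
    have hBloc : ∀ u ∈ Set.Icc s t, ‖X (u + τ) * (X (s + τ))⁻¹‖ ≤ B := by
      intro u hu
      apply hB
      rw [show u + τ - (s + τ) = u - s by ring,
        abs_of_nonneg (by linarith [hu.1] : (0 : ℝ) ≤ u - s)]
      linarith [hu.2]
    have h := diff_fwd hM hX hXinv hAτ (le_of_lt hε0) h1 hBloc
    refine h.trans ?_
    have hexp : Real.exp (M * (t - s)) ≤ Real.exp (M * L) :=
      Real.exp_le_exp.mpr (mul_le_mul_of_nonneg_left h2 hM0)
    have k1 : ε * B * (t - s) ≤ ε * B * L :=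
      mul_le_mul_of_nonneg_left h2 (mul_nonneg hε0.le hB0)
    have k2 : (0 : ℝ) ≤ ε * B * L := mul_nonneg (mul_nonneg hε0.le hB0) hL0.le
    calc ε * B * (t - s) * Real.exp (M * (t - s))
        ≤ ε * B * L * Real.exp (M * L) :=
          mul_le_mul k1 hexp (Real.exp_pos _).le k2
      _ = Cd * ε := by rw [hCdDef]; ring
  -- part (c) estimate, for any |t - s| ≤ L
  have hccL : ∀ t s : ℝ, |t - s| ≤ L →
      ‖X (t + τ) * (X (s + τ))⁻¹ - X t * (X s)⁻¹‖ ≤ Cc * ε := by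
    intro t s h
    rcases le_total s t with h1 | h1
    · have h2 : t - s ≤ L := by
        rw [abs_of_nonneg (by linarith : (0 : ℝ) ≤ t - s)] at h; linarith
      exact (hfwd s t h1 h2).trans (by nlinarith)
    · have h2 : s - t ≤ L := by
        rw [abs_of_nonpos (by linarith : t - s ≤ 0), neg_sub] at h; linarith
      have hQ := hfwd t s h1 h2
      set P := X (s + τ) * (X (t + τ))⁻¹ with hPd
      set Q := X s * (X t)⁻¹ with hQd
      have du : ∀ r : ℝ, IsUnit (X r).det := fun r =>
        (Matrix.isUnit_iff_isUnit_det _).mp (hXinv r)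
      have hPinv : P⁻¹ = X (t + τ) * (X (s + τ))⁻¹ := by
        rw [hPd, Matrix.mul_inv_rev, Matrix.nonsing_inv_nonsing_inv _ (du (t + τ))]
      have hQinv : Q⁻¹ = X t * (X s)⁻¹ := by
        rw [hQd, Matrix.mul_inv_rev, Matrix.nonsing_inv_nonsing_inv _ (du t)]
      have e1 : Q * Q⁻¹ = 1 := by
        rw [hQd, hQinv]
        calc X s * (X t)⁻¹ * (X t * (X s)⁻¹)
            = X s * ((X t)⁻¹ * X t) * (X s)⁻¹ := by noncomm_ring
          _ = 1 := by rw [Matrix.nonsing_inv_mul _ (du t), Matrix.mul_one,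
              Matrix.mul_nonsing_inv _ (du s)]
      have e2 : P⁻¹ * P = 1 := by
        rw [hPd, hPinv]
        calc X (t + τ) * (X (s + τ))⁻¹ * (X (s + τ) * (X (t + τ))⁻¹)
            = X (t + τ) * ((X (s + τ))⁻¹ * X (s + τ)) * (X (t + τ))⁻¹ := by noncomm_ring
          _ = 1 := by rw [Matrix.nonsing_inv_mul _ (du (s + τ)), Matrix.mul_one,
              Matrix.mul_nonsing_inv _ (du (t + τ))]
      have hid : P⁻¹ - Q⁻¹ = P⁻¹ * (Q - P) * Q⁻¹ := by
        calc P⁻¹ - Q⁻¹ = P⁻¹ * (Q * Q⁻¹) - P⁻¹ * P * Q⁻¹ := by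
              rw [e1, e2]; simp
          _ = P⁻¹ * (Q - P) * Q⁻¹ := by noncomm_ring
      have hPb : ‖P⁻¹‖ ≤ B := by
        rw [hPinv]
        exact hB _ _ (by rw [show t + τ - (s + τ) = t - s by ring]; exact h)
      have hQb : ‖Q⁻¹‖ ≤ B := by rw [hQinv]; exact hB _ _ h
      have hQP : ‖Q - P‖ ≤ Cd * ε := by
        rw [norm_sub_rev]; rw [hPd, hQd]; exact hQ
      rw [← hPinv, ← hQinv, hid]
      calc ‖P⁻¹ * (Q - P) * Q⁻¹‖ ≤ ‖P⁻¹ * (Q - P)‖ * ‖Q⁻¹‖ := norm_mul_le _ _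
        _ ≤ ‖P⁻¹‖ * ‖Q - P‖ * ‖Q⁻¹‖ :=
            mul_le_mul_of_nonneg_right (norm_mul_le _ _) (norm_nonneg _)
        _ ≤ B * (Cd * ε) * B := by
            refine mul_le_mul ?_ hQb (norm_nonneg _) (by positivity)
            exact mul_le_mul hPb hQP (norm_nonneg _) hB0
        _ ≤ Cc * ε := by rw [hCcDef]; nlinarith
  -- Lipschitz in the first argument
  have hlip1 : ∀ s t t' : ℝ, |t - s| ≤ L → |t' - s| ≤ L →
      ‖X t' * (X s)⁻¹ - X t * (X s)⁻¹‖ ≤ Cl1 * |t' - t| := by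
    intro s t t' h1 h2
    have hconv : Convex ℝ (Set.Icc (min t t') (max t t')) := convex_Icc _ _
    have key := hconv.norm_image_sub_le_of_norm_hasDerivWithin_le
      (f := fun u => X u * (X s)⁻¹) (f' := fun u => A u * (X u * (X s)⁻¹)) (C := Cl1)
      (fun u _ => by
        simpa [Matrix.mul_assoc] using ((hX u).mul_const ((X s)⁻¹)).hasDerivWithinAt)
      (fun u hu => by
        have hus : |u - s| ≤ L := by
          rw [abs_le] at h1 h2 ⊢
          rcases le_total t t' with h | h
          · rw [min_eq_left h, max_eq_right h] at hu
            exact ⟨by linarith [hu.1], by linarith [hu.2]⟩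
          · rw [min_eq_right h, max_eq_left h] at hu
            exact ⟨by linarith [hu.1], by linarith [hu.2]⟩
        calc ‖A u * (X u * (X s)⁻¹)‖ ≤ ‖A u‖ * ‖X u * (X s)⁻¹‖ := norm_mul_le _ _
          _ ≤ M * B := mul_le_mul (hM u) (hB u s hus) (norm_nonneg _) hM0
          _ = Cl1 := hCl1Def.symm)
      ⟨min_le_left _ _, le_max_left _ _⟩ ⟨min_le_right _ _, le_max_right _ _⟩
    simpa [Real.norm_eq_abs] using key
  -- Lipschitz in the second argument
  have hlip2 : ∀ t s s' : ℝ, |t - s| ≤ L → |s' - s| ≤ 1 →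
      ‖X t * (X s')⁻¹ - X t * (X s)⁻¹‖ ≤ Cl2 * |s' - s| := by
    intro t s s' h1 h2
    have du : ∀ r : ℝ, IsUnit (X r).det := fun r =>
      (Matrix.isUnit_iff_isUnit_det _).mp (hXinv r)
    have e1 : (X s)⁻¹ * X s = 1 := Matrix.nonsing_inv_mul _ (du s)
    have e2 : X s' * (X s')⁻¹ = 1 := Matrix.mul_nonsing_inv _ (du s')
    have hfac : X t * (X s')⁻¹ - X t * (X s)⁻¹
        = (X t * (X s)⁻¹) * (X s * (X s')⁻¹ - X s' * (X s')⁻¹) := by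
      calc X t * (X s')⁻¹ - X t * (X s)⁻¹
          = X t * ((X s)⁻¹ * X s) * (X s')⁻¹ - X t * (X s)⁻¹ * (X s' * (X s')⁻¹) := by
            rw [e1, e2, Matrix.mul_one, Matrix.mul_one]
        _ = (X t * (X s)⁻¹) * (X s * (X s')⁻¹ - X s' * (X s')⁻¹) := by noncomm_ring
    have hss' : |s - s'| ≤ L := by
      rw [abs_sub_comm]; exact h2.trans (by linarith)
    have hl := hlip1 s' s' s (by simpa using hL0.le) hss'
    rw [hfac]
    calc ‖(X t * (X s)⁻¹) * (X s * (X s')⁻¹ - X s' * (X s')⁻¹)‖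
        ≤ ‖X t * (X s)⁻¹‖ * ‖X s * (X s')⁻¹ - X s' * (X s')⁻¹‖ := norm_mul_le _ _
      _ ≤ B * (Cl1 * |s - s'|) := mul_le_mul (hB t s h1) hl (norm_nonneg _) hB0
      _ = Cl2 * |s' - s| := by
          rw [abs_sub_comm, hCl2Def, hCl1Def]; ring
  -- notation for the four relevant points
  have hts_le : ∀ m : ℤ, ts (m + 1) - ts m ≤ θ := fun m => hθ.1 ⟨m, rfl⟩
  set a := ts n with had
  set b := ts (n + 1) with hbd
  set a' := ts (n + p) with had'
  set b' := ts (n + p + 1) with hbd'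
  have hδ0 : |a' - a - τ| ≤ ε := hp n
  have hδ1 : |b' - b - τ| ≤ ε := by
    have h := hp (n + 1)
    rwa [show n + 1 + p = n + p + 1 by ring] at h
  rw [abs_le] at hδ0 hδ1
  have hba : b - a ≤ θ := hts_le n
  have hab : a ≤ b := (hts (lt_add_one n)).le
  have tri : ∀ x y z : Mat q, ‖x - z‖ ≤ ‖x - y‖ + ‖y - z‖ := by
    intro x y z
    calc ‖x - z‖ = ‖(x - y) + (y - z)‖ := by rw [sub_add_sub_cancel]
      _ ≤ ‖x - y‖ + ‖y - z‖ := norm_add_le _ _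
  refine ⟨?_, ?_, ?_, ?_⟩
  · -- (a)
    rintro u ⟨hu1, hu2⟩
    have g1 : |b + τ - (u + τ)| ≤ L := by
      rw [abs_le]; constructor <;> [skip; skip] <;> linarith
    have g2 : |b' - (u + τ)| ≤ L := by
      rw [abs_le]; constructor <;> [skip; skip] <;> linarith
    have t1 := hlip1 (u + τ) (b + τ) b' g1 g2
    have t1' : ‖X b' * (X (u + τ))⁻¹ - X (b + τ) * (X (u + τ))⁻¹‖ ≤ Cl1 * ε := by
      refine t1.trans (mul_le_mul_of_nonneg_left ?_ hCl10)
      rw [show b' - (b + τ) = b' - b - τ by ring, abs_le]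
      exact ⟨hδ1.1, hδ1.2⟩
    have t2 := hccL b u (by rw [abs_le]; exact ⟨by linarith, by linarith⟩)
    calc ‖X b' * (X (u + τ))⁻¹ - X b * (X u)⁻¹‖
        ≤ ‖X b' * (X (u + τ))⁻¹ - X (b + τ) * (X (u + τ))⁻¹‖ +
          ‖X (b + τ) * (X (u + τ))⁻¹ - X b * (X u)⁻¹‖ := tri _ _ _
      _ ≤ Cl1 * ε + Cc * ε := add_le_add t1' t2
      _ ≤ (Cc + Cl1 + Cl2 + 1) * ε := by nlinarith
  · -- (b)
    rintro t ⟨ht1, ht2⟩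
    have g1 : |t + τ - (a + τ)| ≤ L := by
      rw [abs_le]; exact ⟨by linarith, by linarith⟩
    have t1 := hlip2 (t + τ) (a + τ) a' g1
      (by rw [show a' - (a + τ) = a' - a - τ by ring, abs_le]
          exact ⟨by linarith, by linarith⟩)
    have t1' : ‖X (t + τ) * (X a')⁻¹ - X (t + τ) * (X (a + τ))⁻¹‖ ≤ Cl2 * ε := by
      refine t1.trans (mul_le_mul_of_nonneg_left ?_ hCl20)
      rw [show a' - (a + τ) = a' - a - τ by ring, abs_le]
      exact ⟨hδ0.1, hδ0.2⟩
    have t2 := hccL t a (by rw [abs_le]; exact ⟨by linarith, by linarith⟩)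
    calc ‖X (t + τ) * (X a')⁻¹ - X t * (X a)⁻¹‖
        ≤ ‖X (t + τ) * (X a')⁻¹ - X (t + τ) * (X (a + τ))⁻¹‖ +
          ‖X (t + τ) * (X (a + τ))⁻¹ - X t * (X a)⁻¹‖ := tri _ _ _
      _ ≤ Cl2 * ε + Cc * ε := add_le_add t1' t2
      _ ≤ (Cc + Cl1 + Cl2 + 1) * ε := by nlinarith
  · -- (c)
    intro t s h
    exact (hccL t s (h.trans hθL)).trans (by nlinarith)
  · -- (d)
    have g1 : |b' - a'| ≤ L := by rw [abs_le]; exact ⟨by linarith, by linarith⟩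
    have g2 : |b + τ - a'| ≤ L := by rw [abs_le]; exact ⟨by linarith, by linarith⟩
    have t1 := hlip1 a' (b + τ) b' g2 g1
    have t1' : ‖X b' * (X a')⁻¹ - X (b + τ) * (X a')⁻¹‖ ≤ Cl1 * ε := by
      refine t1.trans (mul_le_mul_of_nonneg_left ?_ hCl10)
      rw [show b' - (b + τ) = b' - b - τ by ring, abs_le]
      exact ⟨hδ1.1, hδ1.2⟩
    have t2 := hlip2 (b + τ) (a + τ) a'
      (by rw [abs_le]; exact ⟨by linarith, by linarith⟩)
      (by rw [show a' - (a + τ) = a' - a - τ by ring, abs_le]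
          exact ⟨by linarith, by linarith⟩)
    have t2' : ‖X (b + τ) * (X a')⁻¹ - X (b + τ) * (X (a + τ))⁻¹‖ ≤ Cl2 * ε := by
      refine t2.trans (mul_le_mul_of_nonneg_left ?_ hCl20)
      rw [show a' - (a + τ) = a' - a - τ by ring, abs_le]
      exact ⟨hδ0.1, hδ0.2⟩
    have t3 := hccL b a (by rw [abs_le]; exact ⟨by linarith, by linarith⟩)
    calc ‖X b' * (X a')⁻¹ - X b * (X a)⁻¹‖
        ≤ ‖X b' * (X a')⁻¹ - X (b + τ) * (X a')⁻¹‖ +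
          ‖X (b + τ) * (X a')⁻¹ - X b * (X a)⁻¹‖ := tri _ _ _
      _ ≤ Cl1 * ε + (‖X (b + τ) * (X a')⁻¹ - X (b + τ) * (X (a + τ))⁻¹‖ +
          ‖X (b + τ) * (X (a + τ))⁻¹ - X b * (X a)⁻¹‖) :=
          add_le_add t1' (tri _ _ _)
      _ ≤ Cl1 * ε + (Cl2 * ε + Cc * ε) := by
          exact add_le_add le_rfl (add_le_add t2' t3)
      _ ≤ (Cc + Cl1 + Cl2 + 1) * ε := by nlinarith
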